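/- Let F ∈ C(ℝ≥0) be bounded, n ≥ 0 an integer, and define recursively F_{0,n} = F and F_{m+1,n}(t) = −∫₀¹ s^{n+2m} F_{m,n}(st) ds. Then for every even Schwartz function φ on ℝ and every m ≥ 1, ∫₀^∞ tⁿ F(t) φ(t) dt = ∫₀^∞ t^{n+2m} F_{m,n}(t) (t^{−1}∂_t)^m φ(t) dt. -/

import Mathlib

noncomputable def Frec (F : ℝ → ℂ) (n : ℕ) : ℕ → ℝ → ℂ
  | 0 => F
  | (m+1) => fun t => -∫ s in (0:ℝ)..1, (s:ℂ)^(n+2*m) * Frec F n m (s*t)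

/-- The operator `f ↦ t⁻¹ ∂ₜ f`. -/
noncomputable def invD (g : ℝ → ℂ) : ℝ → ℂ := fun t => (t : ℂ)⁻¹ * deriv g t

open MeasureTheory

namespace TraceAux
open Set Filter Topology

section Schwartz
variable (φ : SchwartzMap ℝ ℂ)

/-! ### Schwartz side -/

variable (φ : SchwartzMap ℝ ℂ)

lemma schwartz_decay (k N : ℕ) : ∃ C : ℝ, 0 ≤ C ∧ ∀ t : ℝ, 0 < t →
    t ^ k * (1 + t) ^ N * ‖iteratedDeriv k (⇑φ) t‖ ≤ C := by
  refine ⟨2 ^ (k+N) * (Finset.Iic ((k+N), k)).sup (fun m => SchwartzMap.seminorm ℝ m.1 m.2) φ,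
    by positivity, fun t ht => ?_⟩
  have h := SchwartzMap.one_add_le_sup_seminorm_apply (𝕜 := ℝ) (m := ((k+N), k))
    (k := k + N) (n := k) le_rfl le_rfl φ t
  rw [norm_iteratedFDeriv_eq_norm_iteratedDeriv] at h
  refine le_trans ?_ h
  have h1 : t ^ k * (1+t) ^ N ≤ (1 + ‖t‖) ^ (k + N) := by
    rw [Real.norm_eq_abs, abs_of_pos ht, pow_add]
    have : t ^ k ≤ (1+t) ^ k := pow_le_pow_left₀ ht.le (by linarith) k
    have h2 : (0:ℝ) < 1 + t := by linarith
    nlinarith [pow_pos h2 k, pow_pos h2 N, pow_nonneg ht.le k]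
  exact mul_le_mul_of_nonneg_right h1 (norm_nonneg _)

lemma sum_hasDerivAt (c : ℕ → ℝ) (M : ℕ) (z : ℕ → ℤ) {t : ℝ} (ht : t ≠ 0) :
    HasDerivAt (fun s : ℝ => ∑ k ∈ Finset.range M,
        (c k : ℂ) * (s:ℂ) ^ (z k) * iteratedDeriv k (⇑φ) s)
      (∑ k ∈ Finset.range M,
        (((c k : ℂ) * ((z k : ℂ) * (t:ℂ) ^ (z k - 1))) * iteratedDeriv k (⇑φ) t
          + ((c k : ℂ) * (t:ℂ) ^ (z k)) * iteratedDeriv (k+1) (⇑φ) t)) t := by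
  apply HasDerivAt.fun_sum
  intro k _
  have hz : HasDerivAt (fun s : ℝ => ((s:ℂ)) ^ (z k))
      (((z k : ℂ)) * (t:ℂ) ^ (z k - 1)) t :=
    (hasDerivAt_zpow (z k) (t:ℂ) (Or.inl (by exact_mod_cast ht))).comp_ofReal
  have hsm : ContDiff ℝ ((⊤:ℕ∞):WithTop ℕ∞) (⇑φ) := φ.smooth ⊤
  have hdiff : Differentiable ℝ (iteratedDeriv k (⇑φ)) :=
    hsm.differentiable_iteratedDeriv k (by exact_mod_cast lt_top_iff_ne_top.mpr (WithTop.coe_ne_top))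
  have hφk : HasDerivAt (iteratedDeriv k (⇑φ)) (iteratedDeriv (k+1) (⇑φ) t) t := by
    rw [iteratedDeriv_succ]
    exact (hdiff t).hasDerivAt
  simpa [mul_assoc] using (hz.const_mul ((c k : ℂ))).fun_mul hφk

lemma invD_formula : ∀ m : ℕ, ∃ c : ℕ → ℝ, (∀ k, m < k → c k = 0) ∧
    ∀ t : ℝ, 0 < t → invD^[m] (⇑φ) t
      = ∑ k ∈ Finset.range (m+1),
          (c k : ℂ) * (t:ℂ) ^ ((k : ℤ) - 2*m) * iteratedDeriv k (⇑φ) t := by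
  intro m
  induction m with
  | zero =>
    refine ⟨fun k => if k = 0 then 1 else 0, fun k hk => if_neg (by omega), ?_⟩
    intro t ht
    simp [iteratedDeriv_zero]
  | succ m ih =>
    obtain ⟨c, hc0, hc⟩ := ih
    refine ⟨fun k => c k * ((k:ℝ) - 2*m) + (if k = 0 then 0 else c (k-1)), ?_, ?_⟩
    · intro k hk
      have h1 : c k = 0 := hc0 k (by omega)
      have h2 : (if k = 0 then (0:ℝ) else c (k-1)) = 0 := by
        rw [if_neg (by omega)]
        exact hc0 _ (by omega)
      simp [h1, h2]
    · intro t ht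
      have ht' : (t:ℝ) ≠ 0 := ht.ne'
      have htC : (t:ℂ) ≠ 0 := by exact_mod_cast ht'
      -- derivative of the m-th iterate at t
      have hD := sum_hasDerivAt φ c (m+1) (fun k => (k:ℤ) - 2*m) ht'
      have hEq : invD^[m] (⇑φ) =ᶠ[nhds t] (fun s : ℝ => ∑ k ∈ Finset.range (m+1),
          (c k : ℂ) * (s:ℂ) ^ ((k:ℤ) - 2*m) * iteratedDeriv k (⇑φ) s) := by
        filter_upwards [isOpen_Ioi.mem_nhds (show t ∈ Ioi (0:ℝ) from ht)] with s hs
        exact hc s hs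
      have hD' : HasDerivAt (invD^[m] (⇑φ)) _ t := hD.congr_of_eventuallyEq hEq
      have hderiv : deriv (invD^[m] (⇑φ)) t = ∑ k ∈ Finset.range (m+1),
        (((c k : ℂ) * (((k:ℤ) - 2*m : ℤ) * (t:ℂ) ^ (((k:ℤ) - 2*m) - 1))) * iteratedDeriv k (⇑φ) t
          + ((c k : ℂ) * (t:ℂ) ^ ((k:ℤ) - 2*m)) * iteratedDeriv (k+1) (⇑φ) t) := hD'.deriv
      rw [Function.iterate_succ_apply']
      show (t:ℂ)⁻¹ * deriv (invD^[m] (⇑φ)) t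
        = ∑ k ∈ Finset.range (m+2),
            ((c k * ((k:ℝ) - 2*m) + (if k = 0 then 0 else c (k-1)) : ℝ) : ℂ)
              * (t:ℂ) ^ ((k:ℤ) - 2*((m+1:ℕ):ℤ)) * iteratedDeriv k (⇑φ) t
      rw [hderiv, Finset.mul_sum]
      -- split the RHS sum
      have hsplit : ∀ k ∈ Finset.range (m+2),
          ((c k * ((k:ℝ) - 2*m) + (if k = 0 then 0 else c (k-1)) : ℝ) : ℂ)
            * (t:ℂ) ^ ((k:ℤ) - 2*((m+1:ℕ):ℤ)) * iteratedDeriv k (⇑φ) t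
          = (c k * ((k:ℝ) - 2*m) : ℝ) * (t:ℂ) ^ ((k:ℤ) - 2*((m+1:ℕ):ℤ)) * iteratedDeriv k (⇑φ) t
            + ((if k = 0 then (0:ℝ) else c (k-1)) : ℝ) * (t:ℂ) ^ ((k:ℤ) - 2*((m+1:ℕ):ℤ))
              * iteratedDeriv k (⇑φ) t := by
        intro k _
        push_cast
        ring
      rw [Finset.sum_congr rfl hsplit, Finset.sum_add_distrib]
      -- first sum: top term vanishes
      rw [Finset.sum_range_succ (fun k => ((c k * ((k:ℝ) - 2*m) : ℝ) : ℂ)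
        * (t:ℂ) ^ ((k:ℤ) - 2*((m+1:ℕ):ℤ)) * iteratedDeriv k (⇑φ) t)]
      rw [hc0 (m+1) (Nat.lt_succ_self m)]
      -- second sum: shift index
      rw [Finset.sum_range_succ' (fun k => (((if k = 0 then (0:ℝ) else c (k-1)) : ℝ) : ℂ)
        * (t:ℂ) ^ ((k:ℤ) - 2*((m+1:ℕ):ℤ)) * iteratedDeriv k (⇑φ) t) (m+1)]
      rw [eq_comm]
      simp only [Nat.succ_ne_zero, if_false, if_true, Nat.add_sub_cancel, eq_self_iff_true,
        Complex.ofReal_zero, zero_mul, mul_zero, add_zero, Complex.ofReal_mul]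
      rw [← Finset.sum_add_distrib]
      apply Finset.sum_congr rfl
      intro k hk
      have e2 : ((k:ℤ) - 2*((m+1:ℕ):ℤ)) = ((k:ℤ) - 2*m) - 1 - 1 := by push_cast; ring
      have e3 : (((k+1:ℕ):ℤ) - 2*((m+1:ℕ):ℤ)) = ((k:ℤ) - 2*m) - 1 := by push_cast; ring
      rw [e2, e3]
      simp only [zpow_sub_one₀ htC]
      push_cast
      ring
/-- Decay bound for the iterates, with pole control at `0`. -/
lemma invD_decay (m N : ℕ) : ∃ C : ℝ, 0 ≤ C ∧ ∀ t : ℝ, 0 < t →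
    t ^ (2*m) * (1+t) ^ N * ‖invD^[m] (⇑φ) t‖ ≤ C := by
  obtain ⟨c, -, hc⟩ := invD_formula φ m
  choose Ck hCk0 hCk using fun k => schwartz_decay φ k N
  refine ⟨∑ k ∈ Finset.range (m+1), |c k| * Ck k,
    Finset.sum_nonneg fun k _ => mul_nonneg (abs_nonneg _) (hCk0 k), fun t ht => ?_⟩
  have h1 : (0:ℝ) < 1 + t := by linarith
  rw [hc t ht]
  calc t ^ (2*m) * (1+t) ^ N * ‖∑ k ∈ Finset.range (m+1),
        (c k : ℂ) * (t:ℂ) ^ ((k : ℤ) - 2*m) * iteratedDeriv k (⇑φ) t‖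
      ≤ t ^ (2*m) * (1+t) ^ N * ∑ k ∈ Finset.range (m+1),
        ‖(c k : ℂ) * (t:ℂ) ^ ((k : ℤ) - 2*m) * iteratedDeriv k (⇑φ) t‖ := by
        apply mul_le_mul_of_nonneg_left (norm_sum_le _ _) (by positivity)
    _ = ∑ k ∈ Finset.range (m+1), t ^ (2*m) * (1+t) ^ N *
        ‖(c k : ℂ) * (t:ℂ) ^ ((k : ℤ) - 2*m) * iteratedDeriv k (⇑φ) t‖ := by
        rw [Finset.mul_sum]
    _ ≤ ∑ k ∈ Finset.range (m+1), |c k| * Ck k := by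
        apply Finset.sum_le_sum
        intro k _
        have htC : ‖(t:ℂ)‖ = t := by rw [Complex.norm_real, Real.norm_eq_abs, abs_of_pos ht]
        rw [norm_mul, norm_mul, norm_zpow, htC, Complex.norm_real, Real.norm_eq_abs]
        have hpow : t ^ (2*m) * t ^ ((k:ℤ) - 2*m) = t ^ k := by
          rw [← zpow_natCast t (2*m), ← zpow_add₀ ht.ne']
          norm_num
        calc t ^ (2*m) * (1+t) ^ N * (|c k| * t ^ ((k:ℤ) - 2*m) * ‖iteratedDeriv k (⇑φ) t‖)
            = |c k| * (t ^ (2*m) * t ^ ((k:ℤ) - 2*m) * ((1+t) ^ N * ‖iteratedDeriv k (⇑φ) t‖)) := by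
              ring
          _ = |c k| * (t ^ k * (1+t) ^ N * ‖iteratedDeriv k (⇑φ) t‖) := by rw [hpow]; ring
          _ ≤ |c k| * Ck k := mul_le_mul_of_nonneg_left (hCk k t ht) (abs_nonneg _)

lemma invD_differentiableAt (m : ℕ) {t : ℝ} (ht : 0 < t) :
    DifferentiableAt ℝ (invD^[m] (⇑φ)) t := by
  obtain ⟨c, -, hc⟩ := invD_formula φ m
  have hD := sum_hasDerivAt φ c (m+1) (fun k => (k:ℤ) - 2*m) ht.ne'
  have hEq : invD^[m] (⇑φ) =ᶠ[nhds t] (fun s : ℝ => ∑ k ∈ Finset.range (m+1),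
      (c k : ℂ) * (s:ℂ) ^ ((k:ℤ) - 2*m) * iteratedDeriv k (⇑φ) s) := by
    filter_upwards [isOpen_Ioi.mem_nhds (show t ∈ Ioi (0:ℝ) from ht)] with s hs
    exact hc s hs
  exact (hD.congr_of_eventuallyEq hEq).differentiableAt

lemma invD_hasDerivAt (m : ℕ) {t : ℝ} (ht : 0 < t) :
    HasDerivAt (invD^[m] (⇑φ)) ((t:ℂ) * invD^[m+1] (⇑φ) t) t := by
  have hd := invD_differentiableAt φ m ht
  have h1 : invD^[m+1] (⇑φ) t = (t:ℂ)⁻¹ * deriv (invD^[m] (⇑φ)) t := by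
    rw [Function.iterate_succ_apply']; rfl
  have htC : (t:ℂ) ≠ 0 := by exact_mod_cast ht.ne'
  have h2 : (t:ℂ) * invD^[m+1] (⇑φ) t = deriv (invD^[m] (⇑φ)) t := by
    rw [h1, ← mul_assoc, mul_inv_cancel₀ htC, one_mul]
  rw [h2]
  exact hd.hasDerivAt

lemma invD_continuousOn (m : ℕ) : ContinuousOn (invD^[m] (⇑φ)) (Ioi 0) :=
  fun t ht => ((invD_differentiableAt φ m ht).continuousAt).continuousWithinAt


end Schwartz

lemma Frec_succ_def (F : ℝ → ℂ) (n m : ℕ) :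
    Frec F n (m+1) = fun t => -∫ s in (0:ℝ)..1, (s:ℂ)^(n+2*m) * Frec F n m (s*t) := rfl

lemma integrableOn_Ioc_of_bound {f : ℝ → ℂ} {C T : ℝ}
    (hf : ContinuousOn f (Ioi 0)) (h : ∀ u ∈ Ioc (0:ℝ) T, ‖f u‖ ≤ C) :
    IntegrableOn f (Ioc 0 T) := by
  have hmeas : AEStronglyMeasurable f (volume.restrict (Ioc (0:ℝ) T)) :=
    (hf.aestronglyMeasurable measurableSet_Ioi).mono_measure
      (Measure.restrict_mono Ioc_subset_Ioi_self le_rfl)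
  refine Integrable.mono' (g := fun _ => C) ?_ hmeas ?_
  · refine integrableOn_const ?_ enorm_ne_top
    rw [Real.volume_Ioc]
    exact ENNReal.ofReal_ne_top
  · rw [ae_restrict_iff' measurableSet_Ioc]
    exact Eventually.of_forall h

lemma Frec_bound (F : ℝ → ℂ) (hFb : ∃ C, ∀ t ≥ (0:ℝ), ‖F t‖ ≤ C) (n : ℕ) :
    ∀ m, ∃ C, 0 ≤ C ∧ ∀ t ≥ (0:ℝ), ‖Frec F n m t‖ ≤ C := by
  intro m
  induction m with
  | zero =>
    obtain ⟨C, hC⟩ := hFb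
    exact ⟨max C 0, le_max_right _ _, fun t ht => (hC t ht).trans (le_max_left _ _)⟩
  | succ m ih =>
    obtain ⟨C, hC0, hC⟩ := ih
    refine ⟨C, hC0, fun t ht => ?_⟩
    rw [Frec_succ_def]
    simp only [norm_neg]
    have h := intervalIntegral.norm_integral_le_of_norm_le_const
      (C := C) (f := fun s : ℝ => (s:ℂ)^(n+2*m) * Frec F n m (s*t)) (a := 0) (b := 1) ?_
    · simpa using h
    · intro s hs
      rw [Set.uIoc_of_le zero_le_one] at hs
      rw [norm_mul, norm_pow, Complex.norm_real, Real.norm_eq_abs, abs_of_pos hs.1]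
      have h1 : s ^ (n+2*m) ≤ 1 := pow_le_one₀ hs.1.le hs.2
      have h2 : ‖Frec F n m (s*t)‖ ≤ C := hC _ (mul_nonneg hs.1.le ht)
      nlinarith [norm_nonneg (Frec F n m (s*t))]

lemma Frec_succ_eq (F : ℝ → ℂ) (n m : ℕ) {t : ℝ} (ht : 0 < t) :
    (t:ℂ)^(n+2*m+1) * Frec F n (m+1) t
      = -∫ u in (0:ℝ)..t, (u:ℂ)^(n+2*m) * Frec F n m u := by
  have h := intervalIntegral.integral_comp_mul_right
    (f := fun u : ℝ => (u:ℂ)^(n+2*m) * Frec F n m u) (a := 0) (b := 1) ht.ne'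
  simp only [zero_mul, one_mul] at h
  have htC : (t:ℂ) ≠ 0 := by exact_mod_cast ht.ne'
  calc (t:ℂ)^(n+2*m+1) * Frec F n (m+1) t
      = -((t:ℂ) * ∫ s in (0:ℝ)..1, (t:ℂ)^(n+2*m) * ((s:ℂ)^(n+2*m) * Frec F n m (s*t))) := by
        rw [Frec_succ_def, intervalIntegral.integral_const_mul, pow_succ]
        ring
    _ = -((t:ℂ) * ∫ s in (0:ℝ)..1,
          (fun u : ℝ => (u:ℂ)^(n+2*m) * Frec F n m u) (s*t)) := by
        congr 1
        congr 1
        apply intervalIntegral.integral_congr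
        intro s _
        simp only
        push_cast
        ring
    _ = -((t:ℂ) * (t⁻¹ • ∫ u in (0:ℝ)..t, (u:ℂ)^(n+2*m) * Frec F n m u)) := by rw [h]
    _ = -∫ u in (0:ℝ)..t, (u:ℂ)^(n+2*m) * Frec F n m u := by
        rw [Complex.real_smul, ← mul_assoc]
        push_cast
        rw [mul_inv_cancel₀ htC, one_mul]

section Fside
variable (F : ℝ → ℂ) (n : ℕ)

lemma G_hasDerivAt (m : ℕ) (hc : ContinuousOn (Frec F n m) (Ioi 0))
    (hb : ∃ C, 0 ≤ C ∧ ∀ t ≥ (0:ℝ), ‖Frec F n m t‖ ≤ C) {t : ℝ} (ht : 0 < t) :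
    HasDerivAt (fun r => ∫ u in (0:ℝ)..r, (u:ℂ)^(n+2*m) * Frec F n m u)
      ((t:ℂ)^(n+2*m) * Frec F n m t) t := by
  obtain ⟨C, hC0, hC⟩ := hb
  have hcont : ContinuousOn (fun u : ℝ => (u:ℂ)^(n+2*m) * Frec F n m u) (Ioi 0) :=
    ((Complex.continuous_ofReal.pow _).continuousOn).mul hc
  have hint : IntervalIntegrable (fun u : ℝ => (u:ℂ)^(n+2*m) * Frec F n m u) volume 0 t := by
    rw [intervalIntegrable_iff_integrableOn_Ioc_of_le ht.le]
    apply integrableOn_Ioc_of_bound (C := t^(n+2*m) * C) hcont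
    intro u hu
    rw [norm_mul, norm_pow, Complex.norm_real, Real.norm_eq_abs, abs_of_pos hu.1]
    exact mul_le_mul (pow_le_pow_left₀ hu.1.le hu.2 _) (hC u hu.1.le) (norm_nonneg _)
      (by positivity)
  exact intervalIntegral.integral_hasDerivAt_right hint
    (hcont.stronglyMeasurableAtFilter isOpen_Ioi t ht)
    (hcont.continuousAt (isOpen_Ioi.mem_nhds ht))

lemma Frec_cont (hFc : ContinuousOn F (Ici 0)) (hFb : ∃ C, ∀ t ≥ (0:ℝ), ‖F t‖ ≤ C) :
    ∀ m, ContinuousOn (Frec F n m) (Ioi 0) := by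
  intro m
  induction m with
  | zero => exact hFc.mono Ioi_subset_Ici_self
  | succ m ih =>
    have hb := Frec_bound F hFb n m
    have hG : ContinuousOn (fun r => ∫ u in (0:ℝ)..r, (u:ℂ)^(n+2*m) * Frec F n m u) (Ioi 0) :=
      fun t ht => ((G_hasDerivAt F n m ih hb ht).continuousAt).continuousWithinAt
    have hpow : ContinuousOn (fun t : ℝ => ((t:ℂ)^(n+2*m+1))⁻¹) (Ioi 0) := by
      apply ContinuousOn.inv₀ ((Complex.continuous_ofReal.pow _).continuousOn)
      intro t ht
      have : (t:ℂ) ≠ 0 := by exact_mod_cast (ne_of_gt ht)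
      exact pow_ne_zero _ this
    apply (hpow.mul hG.neg).congr
    intro t ht
    have htC : (t:ℂ) ≠ 0 := by exact_mod_cast (ne_of_gt (show (0:ℝ) < t from ht))
    have h := Frec_succ_eq F n m (show (0:ℝ) < t from ht)
    simp only [Pi.mul_apply, Pi.neg_apply]
    rw [← h, ← mul_assoc, inv_mul_cancel₀ (pow_ne_zero _ htC), one_mul]

end Fside

lemma key_bound {n' m' N : ℕ} (hN : N = n' + 2) {t x CF Cg : ℝ} (ht : 0 < t) (hx : 0 ≤ x)
    (hCF : 0 ≤ CF) (hd : t^(2*m') * (1+t)^N * x ≤ Cg) :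
    t^(n'+2*m') * CF * x ≤ CF * Cg * (1+t^2)⁻¹ := by
  have h1 : (0:ℝ) < 1 + t^2 := by positivity
  have l1 : t^n' ≤ (1+t)^n' := pow_le_pow_left₀ ht.le (by linarith) _
  have l2 : 1 + t^2 ≤ (1+t)^2 := by nlinarith
  have l3 : t^(n'+2*m') * (1+t^2) ≤ t^(2*m') * (1+t)^N := by
    rw [pow_add, hN, pow_add]
    calc t^n' * t^(2*m') * (1+t^2) = t^(2*m') * (t^n' * (1+t^2)) := by ring
      _ ≤ t^(2*m') * ((1+t)^n' * (1+t)^2) :=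
          mul_le_mul_of_nonneg_left
            (mul_le_mul l1 l2 (by positivity) (by positivity)) (by positivity)
      _ = t^(2*m') * ((1+t)^n' * (1+t)^2) := rfl
  rw [← div_eq_mul_inv, le_div_iff₀ h1]
  calc t^(n'+2*m') * CF * x * (1+t^2) = CF * (x * (t^(n'+2*m') * (1+t^2))) := by ring
    _ ≤ CF * (x * (t^(2*m') * (1+t)^N)) :=
        mul_le_mul_of_nonneg_left (mul_le_mul_of_nonneg_left l3 hx) hCF
    _ = CF * (t^(2*m') * (1+t)^N * x) := by ring
    _ ≤ CF * Cg := mul_le_mul_of_nonneg_left hd hCF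

lemma integrableOn_Ioi_of_bound {f : ℝ → ℂ} {C : ℝ} (hf : ContinuousOn f (Ioi 0))
    (h : ∀ t ∈ Ioi (0:ℝ), ‖f t‖ ≤ C * (1+t^2)⁻¹) : IntegrableOn f (Ioi 0) := by
  refine Integrable.mono' (g := fun t => C * (1+t^2)⁻¹)
    ((integrable_inv_one_add_sq.const_mul C).integrableOn)
    (hf.aestronglyMeasurable measurableSet_Ioi) ?_
  rw [ae_restrict_iff' measurableSet_Ioi]
  exact Eventually.of_forall h

lemma step (F : ℝ → ℂ) (hFc : ContinuousOn F (Set.Ici 0))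
    (hFb : ∃ C, ∀ t ≥ (0:ℝ), ‖F t‖ ≤ C) (n : ℕ) (φ : SchwartzMap ℝ ℂ) (m : ℕ) :
    ∫ t in Set.Ioi (0:ℝ), (t:ℂ)^(n+2*m) * Frec F n m t * (invD^[m] (⇑φ)) t
      = ∫ t in Set.Ioi (0:ℝ),
          (t:ℂ)^(n+2*(m+1)) * Frec F n (m+1) t * (invD^[m+1] (⇑φ)) t := by
  set g : ℝ → ℂ := invD^[m] (⇑φ) with hg
  set g' : ℝ → ℂ := invD^[m+1] (⇑φ) with hg'
  set Fm : ℝ → ℂ := Frec F n m with hFm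
  set G : ℝ → ℂ := fun r => ∫ u in (0:ℝ)..r, (u:ℂ)^(n+2*m) * Fm u with hG
  set A : ℝ → ℂ := fun t => (t:ℂ)^(n+2*m) * Fm t * g t with hA
  set B : ℝ → ℂ := fun t => G t * ((t:ℂ) * g' t) with hB
  set H : ℝ → ℂ := fun t => G t * g t with hH
  obtain ⟨CF, hCF0, hCF⟩ := Frec_bound F hFb n m
  obtain ⟨Cg, hCg0, hCg⟩ := invD_decay φ m (n+2)
  obtain ⟨Cg', hCg'0, hCg'⟩ := invD_decay φ (m+1) (n+2)
  have hFmc : ContinuousOn Fm (Ioi 0) := Frec_cont F n hFc hFb m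
  have hFmb : ∃ C, 0 ≤ C ∧ ∀ t ≥ (0:ℝ), ‖Fm t‖ ≤ C := ⟨CF, hCF0, hCF⟩
  -- bound on G
  have hGb : ∀ t : ℝ, 0 < t → ‖G t‖ ≤ CF * t^(n+2*m) * t := by
    intro t ht
    have hb : ∀ u ∈ Set.uIoc (0:ℝ) t, ‖(u:ℂ)^(n+2*m) * Fm u‖ ≤ CF * t^(n+2*m) := by
      intro u hu
      rw [Set.uIoc_of_le ht.le] at hu
      rw [norm_mul, norm_pow, Complex.norm_real, Real.norm_eq_abs, abs_of_pos hu.1, mul_comm CF]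
      exact mul_le_mul (pow_le_pow_left₀ hu.1.le hu.2 _) (hCF u hu.1.le) (norm_nonneg _)
        (by positivity)
    have h0 := intervalIntegral.norm_integral_le_of_norm_le_const hb
    rw [sub_zero, abs_of_pos ht] at h0
    exact h0
  -- pointwise bounds
  have hAb : ∀ t ∈ Ioi (0:ℝ), ‖A t‖ ≤ CF * Cg * (1+t^2)⁻¹ := by
    intro t ht
    have ht' : (0:ℝ) < t := ht
    have h1 : ‖A t‖ ≤ t^(n+2*m) * CF * ‖g t‖ := by
      rw [hA]
      simp only [norm_mul, norm_pow, Complex.norm_real, Real.norm_eq_abs, abs_of_pos ht']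
      exact mul_le_mul_of_nonneg_right
        (mul_le_mul_of_nonneg_left (hCF t ht'.le) (by positivity)) (norm_nonneg _)
    exact h1.trans (key_bound rfl ht' (norm_nonneg _) hCF0 (hCg t ht'))
  have hBb : ∀ t ∈ Ioi (0:ℝ), ‖B t‖ ≤ CF * Cg' * (1+t^2)⁻¹ := by
    intro t ht
    have ht' : (0:ℝ) < t := ht
    have h1 : ‖B t‖ ≤ t^(n+2*(m+1)) * CF * ‖g' t‖ := by
      rw [hB]
      simp only [norm_mul, Complex.norm_real, Real.norm_eq_abs, abs_of_pos ht']
      calc ‖G t‖ * (t * ‖g' t‖)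
          ≤ (CF * t^(n+2*m) * t) * (t * ‖g' t‖) := by
            apply mul_le_mul_of_nonneg_right (hGb t ht') (by positivity)
        _ = t^(n+2*m)*t*t * CF * ‖g' t‖ := by ring
        _ = t^(n+2*(m+1)) * CF * ‖g' t‖ := by
            rw [show n+2*(m+1) = (n+2*m)+1+1 by ring, pow_succ, pow_succ]
    exact h1.trans (key_bound rfl ht' (norm_nonneg _) hCF0 (hCg' t ht'))
  have hHb : ∀ t : ℝ, 0 < t → ‖H t‖ ≤ CF * Cg * (t * (1+t^2)⁻¹) := by
    intro t ht
    have h1 : ‖H t‖ ≤ t * (t^(n+2*m) * CF * ‖g t‖) := by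
      rw [hH]
      simp only [norm_mul]
      calc ‖G t‖ * ‖g t‖ ≤ (CF * t^(n+2*m) * t) * ‖g t‖ :=
            mul_le_mul_of_nonneg_right (hGb t ht) (norm_nonneg _)
        _ = t * (t^(n+2*m) * CF * ‖g t‖) := by ring
    refine h1.trans ?_
    have h2 := key_bound rfl ht (norm_nonneg _) hCF0 (hCg t ht)
    calc t * (t^(n+2*m) * CF * ‖g t‖) ≤ t * (CF * Cg * (1+t^2)⁻¹) :=
          mul_le_mul_of_nonneg_left h2 ht.le
      _ = CF * Cg * (t * (1+t^2)⁻¹) := by ring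
  -- continuity of G
  have hGc : ContinuousOn G (Ioi 0) :=
    fun t ht => ((G_hasDerivAt F n m hFmc hFmb ht).continuousAt).continuousWithinAt
  -- derivative of H
  have hHd : ∀ t ∈ Ioi (0:ℝ), HasDerivAt H (A t + B t) t := by
    intro t ht
    exact (G_hasDerivAt F n m hFmc hFmb ht).mul (invD_hasDerivAt φ m ht)
  -- integrability
  have hAi : IntegrableOn A (Ioi 0) := by
    apply integrableOn_Ioi_of_bound ?_ hAb
    exact (((Complex.continuous_ofReal.pow _).continuousOn).mul hFmc).mul
      (invD_continuousOn φ m)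
  have hBi : IntegrableOn B (Ioi 0) := by
    apply integrableOn_Ioi_of_bound ?_ hBb
    exact hGc.mul ((Complex.continuous_ofReal.continuousOn).mul (invD_continuousOn φ (m+1)))
  -- limits of H
  have hH0 : H 0 = 0 := by
    rw [hH]
    simp only [hG, intervalIntegral.integral_same, zero_mul]
  have hHtop : Tendsto H atTop (𝓝 0) := by
    apply squeeze_zero_norm' (a := fun t : ℝ => CF * Cg * t⁻¹)
    · filter_upwards [eventually_ge_atTop (1:ℝ)] with t ht
      have ht0 : (0:ℝ) < t := lt_of_lt_of_le one_pos ht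
      refine (hHb t ht0).trans ?_
      have : t * (1+t^2)⁻¹ ≤ t⁻¹ := by
        rw [← div_eq_mul_inv, div_le_iff₀ (by positivity)]
        have h2 : t * t ≤ 1 + t^2 := by nlinarith
        calc t = t⁻¹ * (t * t) := by field_simp
          _ ≤ t⁻¹ * (1+t^2) := by
              apply mul_le_mul_of_nonneg_left h2 (by positivity)
      exact mul_le_mul_of_nonneg_left this (by positivity)
    · simpa using (tendsto_inv_atTop_zero (𝕜 := ℝ)).const_mul (CF * Cg)
  have hHcw : ContinuousWithinAt H (Ici 0) 0 := by
    rw [ContinuousWithinAt, hH0]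
    apply squeeze_zero_norm' (a := fun t : ℝ => CF * Cg * t)
    · filter_upwards [self_mem_nhdsWithin] with t (ht : t ∈ Ici (0:ℝ))
      rcases eq_or_lt_of_le (show (0:ℝ) ≤ t from ht) with h | h
      · rw [← h, hH0]
        simp
      · refine (hHb t h).trans ?_
        have : t * (1+t^2)⁻¹ ≤ t := by
          nlinarith [inv_le_one_of_one_le₀ (show (1:ℝ) ≤ 1+t^2 by nlinarith), h.le,
            inv_pos.2 (show (0:ℝ) < 1+t^2 by positivity)]
        exact mul_le_mul_of_nonneg_left this (by positivity)
    · have : Tendsto (fun t : ℝ => CF * Cg * t) (𝓝 0) (𝓝 (CF * Cg * 0)) :=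
        (continuous_const.mul continuous_id).tendsto 0
      simpa using this.mono_left nhdsWithin_le_nhds
  -- integration by parts
  have hABi : IntegrableOn (fun t => A t + B t) (Ioi 0) := hAi.add hBi
  have key := integral_Ioi_of_hasDerivAt_of_tendsto hHcw hHd hABi hHtop
  rw [hH0, integral_add hAi hBi] at key
  have hIA : ∫ t in Ioi (0:ℝ), A t = -∫ t in Ioi (0:ℝ), B t := by
    rw [eq_neg_iff_add_eq_zero]
    simpa using key
  calc ∫ t in Ioi (0:ℝ), (t:ℂ)^(n+2*m) * Frec F n m t * invD^[m] (⇑φ) t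
      = ∫ t in Ioi (0:ℝ), A t := rfl
    _ = -∫ t in Ioi (0:ℝ), B t := hIA
    _ = ∫ t in Ioi (0:ℝ), -B t := by rw [integral_neg]
    _ = ∫ t in Ioi (0:ℝ), (t:ℂ)^(n+2*(m+1)) * Frec F n (m+1) t * invD^[m+1] (⇑φ) t := by
        apply setIntegral_congr_fun measurableSet_Ioi
        intro t ht
        have ht' : (0:ℝ) < t := ht
        have e : (t:ℂ)^(n+2*(m+1)) = (t:ℂ)^(n+2*m+1) * (t:ℂ) := by
          rw [show n+2*(m+1) = (n+2*m+1)+1 by ring, pow_succ]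
        have h2 : (∫ u in (0:ℝ)..t, (u:ℂ)^(n+2*m) * Frec F n m u)
            = -((t:ℂ)^(n+2*m+1) * Frec F n (m+1) t) := by
          rw [Frec_succ_eq F n m ht', neg_neg]
        show -B t = _
        rw [hB]
        simp only [hG, hFm, hg']
        rw [h2, e]
        ring

theorem main (F : ℝ → ℂ) (hFc : ContinuousOn F (Set.Ici 0))
    (hFb : ∃ C, ∀ t ≥ (0:ℝ), ‖F t‖ ≤ C)
    (n : ℕ) (φ : SchwartzMap ℝ ℂ) (m : ℕ) :
    ∫ t in Set.Ioi (0:ℝ), (t:ℂ)^n * F t * φ t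
      = ∫ t in Set.Ioi (0:ℝ), (t:ℂ)^(n+2*m) * Frec F n m t * (invD^[m] (⇑φ)) t := by
  induction m with
  | zero => simp [Frec]
  | succ m ih => rw [ih]; exact step F hFc hFb n φ m


end TraceAux

open MeasureTheory

theorem trace_integration_by_parts (F : ℝ → ℂ)
    (hFc : ContinuousOn F (Set.Ici 0)) (hFb : ∃ C, ∀ t ≥ (0:ℝ), ‖F t‖ ≤ C)
    (n : ℕ) (φ : SchwartzMap ℝ ℂ) (hφ : ∀ t, φ (-t) = φ t)
    (m : ℕ) (hm : 1 ≤ m) :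
    ∫ t in Set.Ioi (0:ℝ), (t:ℂ)^n * F t * φ t
      = ∫ t in Set.Ioi (0:ℝ), (t:ℂ)^(n+2*m) * Frec F n m t * (invD^[m] (φ : ℝ → ℂ)) t :=
  TraceAux.main F hFc hFb n φ m
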